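/- Let X be a finite-dimensional Banach space and 𝒯 = (T_1,...,T_k) ∈ L(X)^k. Then the p-th joint numerical radius is attained at a pair of extreme points: w_p(𝒯) = max{(Σ_{i=1}^k |x*(T_i x)|^p)^{1/p} : (x,x*) ∈ G_X}, where G_X = {(x,x*) ∈ Π_X : x ∈ E_X, x* ∈ E_{X*}}. -/

import Mathlib

open scoped ENNReal

noncomputable section

/-- The set Π_X of pairs (x, x*) with ‖x‖ = 1, ‖x*‖ = 1 and x*(x) = 1. -/
def dualPairs (𝕜 X : Type*) [RCLike 𝕜] [NormedAddCommGroup X] [NormedSpace 𝕜 X] :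
    Set (X × (X →L[𝕜] 𝕜)) :=
  {q | ‖q.1‖ = 1 ∧ ‖q.2‖ = 1 ∧ q.2 q.1 = 1}

/-- Numerical range of an operator. -/
def numRange {𝕜 X : Type*} [RCLike 𝕜] [NormedAddCommGroup X] [NormedSpace 𝕜 X]
    (T : X →L[𝕜] X) : Set 𝕜 :=
  {c | ∃ q ∈ dualPairs 𝕜 X, c = q.2 (T q.1)}

/-- Numerical radius of an operator. -/
def numRadius {𝕜 X : Type*} [RCLike 𝕜] [NormedAddCommGroup X] [NormedSpace 𝕜 X]
    (T : X →L[𝕜] X) : ℝ :=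
  sSup {r | ∃ q ∈ dualPairs 𝕜 X, r = ‖q.2 (T q.1)‖}

/-- Joint numerical range of a k-tuple of operators. -/
def jointNumRange {𝕜 X : Type*} [RCLike 𝕜] [NormedAddCommGroup X] [NormedSpace 𝕜 X]
    {k : ℕ} (T : Fin k → X →L[𝕜] X) : Set (Fin k → 𝕜) :=
  {v | ∃ q ∈ dualPairs 𝕜 X, v = fun i => q.2 (T i q.1)}

/-- The p-th joint numerical radius of a k-tuple of operators. -/
def jointNumRadius {𝕜 X : Type*} [RCLike 𝕜] [NormedAddCommGroup X] [NormedSpace 𝕜 X]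
    (p : ℝ) {k : ℕ} (T : Fin k → X →L[𝕜] X) : ℝ :=
  sSup {r | ∃ q ∈ dualPairs 𝕜 X, r = (∑ i, ‖q.2 (T i q.1)‖ ^ p) ^ (1 / p)}

/-- The p-th joint operator norm of a k-tuple of operators. -/
def jointOpNorm {𝕜 X Y : Type*} [RCLike 𝕜] [NormedAddCommGroup X] [NormedSpace 𝕜 X]
    [NormedAddCommGroup Y] [NormedSpace 𝕜 Y]
    (p : ℝ) {k : ℕ} (T : Fin k → X →L[𝕜] Y) : ℝ :=
  sSup {r | ∃ x : X, ‖x‖ = 1 ∧ r = (∑ i, ‖T i x‖ ^ p) ^ (1 / p)}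

/-- The numerical index of a space. -/
def numIndex (𝕜 X : Type*) [RCLike 𝕜] [NormedAddCommGroup X] [NormedSpace 𝕜 X] : ℝ :=
  sInf {r | ∃ T : X →L[𝕜] X, ‖T‖ = 1 ∧ r = numRadius T}

/-- The (p,k)-th joint numerical index of a space. -/
def jointNumIndex (p : ℝ) (k : ℕ) (𝕜 X : Type*) [RCLike 𝕜] [NormedAddCommGroup X]
    [NormedSpace 𝕜 X] : ℝ :=
  sInf {r | ∃ T : Fin k → X →L[𝕜] X, jointOpNorm p T = 1 ∧ r = jointNumRadius p T}


open Set Metric in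
/-- In an `RCLike` field, an element of norm at most 1 with real part 1 equals 1. -/
lemma RCLike.eq_one_of_re_eq_one {𝕜 : Type*} [RCLike 𝕜] {z : 𝕜}
    (h1 : ‖z‖ ≤ 1) (h2 : RCLike.re z = 1) : z = 1 := by
  have hsq : ‖z‖ ^ 2 = RCLike.re z * RCLike.re z + RCLike.im z * RCLike.im z :=
    RCLike.norm_sq_eq_def
  have him : RCLike.im z * RCLike.im z ≤ 0 := by nlinarith [norm_nonneg z]
  have him0 : RCLike.im z = 0 := by nlinarith [mul_self_nonneg (RCLike.im z)]
  exact RCLike.ext (by simp [h2]) (by simp [him0])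

open Set Metric in
/-- A convex continuous function on a nonempty compact set attains its maximum
at an extreme point. -/
lemma exists_extremePoint_isMaxOn {E : Type*} [NormedAddCommGroup E] [NormedSpace ℝ E]
    {s : Set E} (hcomp : IsCompact s) (hne : s.Nonempty) {f : E → ℝ}
    (hf : ConvexOn ℝ s f) (hfc : ContinuousOn f s) :
    ∃ e ∈ s.extremePoints ℝ, ∀ x ∈ s, f x ≤ f e := by
  obtain ⟨x₀, hx₀s, hx₀⟩ := hcomp.exists_isMaxOn hne hfc
  have hx₀' : ∀ x ∈ s, f x ≤ f x₀ := fun x hx => hx₀ hx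
  set A : Set E := s ∩ f ⁻¹' {f x₀} with hA
  have hAs : A ⊆ s := inter_subset_left
  have hAclosed : IsClosed A := hfc.preimage_isClosed_of_isClosed hcomp.isClosed isClosed_singleton
  have hAcomp : IsCompact A := hcomp.of_isClosed_subset hAclosed hAs
  obtain ⟨e, heA⟩ := hAcomp.extremePoints_nonempty ⟨x₀, hx₀s, rfl⟩
  have heAmem : e ∈ A := heA.1
  have hfe : f e = f x₀ := heAmem.2
  refine ⟨e, ⟨heAmem.1, ?_⟩, fun x hx => hfe ▸ hx₀' x hx⟩
  intro x₁ hx₁ x₂ hx₂ hseg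
  obtain ⟨a, b, ha, hb, hab, hsum⟩ := hseg
  have hconv : f e ≤ a * f x₁ + b * f x₂ := by
    have := hf.2 hx₁ hx₂ ha.le hb.le hab
    rw [hsum] at this
    simpa using this
  have h₁ : f x₁ ≤ f x₀ := hx₀' _ hx₁
  have h₂ : f x₂ ≤ f x₀ := hx₀' _ hx₂
  have hfx₁ : f x₁ = f x₀ := by
    by_contra h
    have hlt : f x₁ < f x₀ := lt_of_le_of_ne h₁ h
    have h3 := mul_lt_mul_of_pos_left hlt ha
    have h4 := mul_le_mul_of_nonneg_left h₂ hb.le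
    have h5 : a * f x₀ + b * f x₀ = f x₀ := by rw [← add_mul, hab, one_mul]
    linarith
  have hfx₂ : f x₂ = f x₀ := by
    by_contra h
    have hlt : f x₂ < f x₀ := lt_of_le_of_ne h₂ h
    have h3 := mul_lt_mul_of_pos_left hlt hb
    have h4 := mul_le_mul_of_nonneg_left h₁ ha.le
    have h5 : a * f x₀ + b * f x₀ = f x₀ := by rw [← add_mul, hab, one_mul]
    linarith
  exact heA.2 ⟨hx₁, hfx₁⟩ ⟨hx₂, hfx₂⟩ ⟨a, b, ha, hb, hab, hsum⟩

open Set Metric in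
/-- Convexity of `e ↦ ∑ i, ‖L i e‖ ^ p` for real-linear `L i` and `p ≥ 1`. -/
lemma convexOn_sum_norm_rpow {E G : Type*} [AddCommGroup E] [Module ℝ E]
    [SeminormedAddCommGroup G] [NormedSpace ℝ G] {k : ℕ} {p : ℝ} (hp : 1 ≤ p)
    (L : Fin k → E → G) (hadd : ∀ i x y, L i (x + y) = L i x + L i y)
    (hsmul : ∀ i (a : ℝ) x, L i (a • x) = a • L i x) :
    ConvexOn ℝ Set.univ (fun e => ∑ i, ‖L i e‖ ^ p) := by
  have hp0 : 0 ≤ p := zero_le_one.trans hp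
  refine ⟨convex_univ, fun x _ y _ a b ha hb hab => ?_⟩
  have key : ∀ i : Fin k, ‖L i (a • x + b • y)‖ ^ p ≤ a * ‖L i x‖ ^ p + b * ‖L i y‖ ^ p := by
    intro i
    have h1 : ‖L i (a • x + b • y)‖ ≤ a * ‖L i x‖ + b * ‖L i y‖ := by
      rw [hadd, hsmul, hsmul]
      calc ‖a • L i x + b • L i y‖ ≤ ‖a • L i x‖ + ‖b • L i y‖ := norm_add_le _ _
        _ = a * ‖L i x‖ + b * ‖L i y‖ := by
            rw [norm_smul, norm_smul, Real.norm_of_nonneg ha, Real.norm_of_nonneg hb]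
    have h2 : (a * ‖L i x‖ + b * ‖L i y‖) ^ p ≤ a * ‖L i x‖ ^ p + b * ‖L i y‖ ^ p := by
      have := (convexOn_rpow hp).2 (Set.mem_Ici.2 (norm_nonneg (L i x)))
        (Set.mem_Ici.2 (norm_nonneg (L i y))) ha hb hab
      simpa [smul_eq_mul] using this
    exact (Real.rpow_le_rpow (norm_nonneg _) h1 hp0).trans h2
  calc (∑ i, ‖L i (a • x + b • y)‖ ^ p) ≤ ∑ i, (a * ‖L i x‖ ^ p + b * ‖L i y‖ ^ p) :=
        Finset.sum_le_sum fun i _ => key i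
    _ = a • (∑ i, ‖L i x‖ ^ p) + b • (∑ i, ‖L i y‖ ^ p) := by
        rw [Finset.sum_add_distrib, ← Finset.mul_sum, ← Finset.mul_sum]; rfl

open Set Metric in
/-- Maximizing a convex continuous function over the face of the unit ball determined by
a norm-one functional: the maximum is attained at an extreme point of the unit ball
lying in the face. -/
lemma face_max {𝕜 E : Type*} [RCLike 𝕜] [NormedAddCommGroup E] [NormedSpace 𝕜 E]
    [NormedSpace ℝ E] [IsScalarTower ℝ 𝕜 E] [FiniteDimensional 𝕜 E]
    (Λ : E →L[𝕜] 𝕜) (hΛ : ‖Λ‖ ≤ 1) {e₀ : E} (he₀ : ‖e₀‖ ≤ 1) (heΛ : Λ e₀ = 1)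
    {g : E → ℝ} (hg : ConvexOn ℝ Set.univ g) (hgc : Continuous g) :
    ∃ e₁ : E, ‖e₁‖ ≤ 1 ∧ Λ e₁ = 1 ∧
      e₁ ∈ Set.extremePoints ℝ (Metric.closedBall (0 : E) 1) ∧ g e₀ ≤ g e₁ := by
  haveI : ProperSpace E := FiniteDimensional.proper 𝕜 E
  set l : E →L[ℝ] ℝ := RCLike.reCLM.comp (Λ.restrictScalars ℝ) with hl_def
  have hl : ∀ e : E, l e = RCLike.re (Λ e) := fun e => rfl
  have hΛnorm : ∀ e : E, ‖e‖ ≤ 1 → ‖Λ e‖ ≤ 1 := fun e he => by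
    calc ‖Λ e‖ ≤ ‖Λ‖ * ‖e‖ := Λ.le_opNorm e
      _ ≤ 1 * 1 := mul_le_mul hΛ he (norm_nonneg _) zero_le_one
      _ = 1 := one_mul 1
  have hb : ∀ e : E, ‖e‖ ≤ 1 → l e ≤ 1 := fun e he =>
    (RCLike.re_le_norm _).trans (hΛnorm e he)
  have hle₀ : l e₀ = 1 := by rw [hl, heΛ]; simp
  set F := l.toExposed (Metric.closedBall (0 : E) 1) with hF_def
  have hFeq : F = {e : E | ‖e‖ ≤ 1 ∧ Λ e = 1} := by
    ext e
    constructor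
    · rintro ⟨heB, hmax⟩
      have he1 : ‖e‖ ≤ 1 := mem_closedBall_zero_iff.1 heB
      have h1 : (1 : ℝ) ≤ l e := by
        have := hmax e₀ (mem_closedBall_zero_iff.2 he₀)
        rwa [hle₀] at this
      have hre : RCLike.re (Λ e) = 1 := le_antisymm (hb e he1) h1
      exact ⟨he1, RCLike.eq_one_of_re_eq_one (hΛnorm e he1) hre⟩
    · rintro ⟨he1, hΛe⟩
      refine ⟨mem_closedBall_zero_iff.2 he1, fun y hy => ?_⟩
      have : l e = 1 := by rw [hl, hΛe]; simp
      rw [this]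
      exact hb y (mem_closedBall_zero_iff.1 hy)
  have hFclosed : IsClosed F := by
    rw [hFeq]
    exact (isClosed_le continuous_norm continuous_const).inter
      (isClosed_eq Λ.continuous continuous_const)
  have hFsub : F ⊆ Metric.closedBall (0 : E) 1 := by
    rw [hFeq]
    exact fun e he => mem_closedBall_zero_iff.2 he.1
  have hFcomp : IsCompact F :=
    (isCompact_closedBall (0 : E) 1).of_isClosed_subset hFclosed hFsub
  have he₀F : e₀ ∈ F := by
    rw [hFeq]; exact ⟨he₀, heΛ⟩
  have hFexp : IsExposed ℝ (Metric.closedBall (0 : E) 1) F :=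
    ContinuousLinearMap.toExposed.isExposed
  have hFconv : Convex ℝ F := hFexp.convex (convex_closedBall 0 1)
  obtain ⟨e₁, he₁ext, he₁max⟩ :=
    exists_extremePoint_isMaxOn hFcomp ⟨e₀, he₀F⟩
      (hg.subset (Set.subset_univ F) hFconv) hgc.continuousOn
  have he₁F : e₁ ∈ F := he₁ext.1
  have hres : e₁ ∈ {e : E | ‖e‖ ≤ 1 ∧ Λ e = 1} := hFeq ▸ he₁F
  exact ⟨e₁, hres.1, hres.2,
    hFexp.isExtreme.extremePoints_subset_extremePoints he₁ext,
    he₁max e₀ he₀F⟩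

theorem stmt5 {𝕜 X : Type*} [RCLike 𝕜] [NormedAddCommGroup X] [NormedSpace 𝕜 X]
    [NormedSpace ℝ X] [IsScalarTower ℝ 𝕜 X]
    [FiniteDimensional 𝕜 X] [Nontrivial X] {p : ℝ} (hp : 1 ≤ p)
    {k : ℕ} (T : Fin k → X →L[𝕜] X) :
    (∃ q ∈ dualPairs 𝕜 X,
        q.1 ∈ Set.extremePoints ℝ (Metric.closedBall (0 : X) 1) ∧
        q.2 ∈ Set.extremePoints ℝ (Metric.closedBall (0 : X →L[𝕜] 𝕜) 1) ∧
        jointNumRadius p T = (∑ i, ‖q.2 (T i q.1)‖ ^ p) ^ (1 / p)) ∧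
    (∀ q ∈ dualPairs 𝕜 X,
        q.1 ∈ Set.extremePoints ℝ (Metric.closedBall (0 : X) 1) →
        q.2 ∈ Set.extremePoints ℝ (Metric.closedBall (0 : X →L[𝕜] 𝕜) 1) →
        (∑ i, ‖q.2 (T i q.1)‖ ^ p) ^ (1 / p) ≤ jointNumRadius p T) := by
  classical
  have hp0 : (0 : ℝ) ≤ p := zero_le_one.trans hp
  have hip0 : (0 : ℝ) ≤ 1 / p := by positivity
  set f : X × (X →L[𝕜] 𝕜) → ℝ := fun q => (∑ i, ‖q.2 (T i q.1)‖ ^ p) ^ (1 / p) with hf_def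
  set S : Set ℝ := {r | ∃ q ∈ dualPairs 𝕜 X, r = (∑ i, ‖q.2 (T i q.1)‖ ^ p) ^ (1 / p)}
    with hS_def
  have hJ : jointNumRadius p T = sSup S := rfl
  -- bounded above
  have hbdd : BddAbove S := by
    refine ⟨(∑ i, ‖T i‖ ^ p) ^ (1 / p), ?_⟩
    rintro r ⟨q, ⟨hq1, hq2, _⟩, rfl⟩
    refine Real.rpow_le_rpow (Finset.sum_nonneg fun i _ => Real.rpow_nonneg (norm_nonneg _) p)
      (Finset.sum_le_sum fun i _ => Real.rpow_le_rpow (norm_nonneg _) ?_ hp0) hip0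
    calc ‖q.2 (T i q.1)‖ ≤ ‖q.2‖ * ‖T i q.1‖ := (q.2).le_opNorm _
      _ = ‖T i q.1‖ := by rw [hq2, one_mul]
      _ ≤ ‖T i‖ * ‖q.1‖ := (T i).le_opNorm _
      _ = ‖T i‖ := by rw [hq1, mul_one]
  -- dualPairs is nonempty
  obtain ⟨x', hx'⟩ := exists_ne (0 : X)
  have hx'0 : ‖x'‖ ≠ 0 := norm_ne_zero_iff.2 hx'
  set x : X := ‖x'‖⁻¹ • x' with hx_def
  have hx : ‖x‖ = 1 := by
    rw [hx_def, norm_smul, norm_inv, norm_norm, inv_mul_cancel₀ hx'0]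
  have hxne : x ≠ 0 := by
    intro h; rw [h, norm_zero] at hx; exact one_ne_zero hx.symm
  obtain ⟨g0, hg0, hg0x⟩ := exists_dual_vector 𝕜 x (norm_ne_zero_iff.2 hxne)
  have hpair0 : (x, g0) ∈ dualPairs 𝕜 X := by
    refine ⟨hx, hg0, ?_⟩
    rw [hg0x, hx]; simp
  have hSne : S.Nonempty := ⟨f (x, g0), ⟨(x, g0), hpair0, rfl⟩⟩
  -- compactness of dualPairs
  haveI : ProperSpace X := FiniteDimensional.proper 𝕜 X
  haveI : ProperSpace (X →L[𝕜] 𝕜) := FiniteDimensional.proper 𝕜 _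
  have heval : Continuous fun q : X × (X →L[𝕜] 𝕜) => q.2 q.1 :=
    isBoundedBilinearMap_apply.continuous.comp continuous_swap
  have hDclosed : IsClosed (dualPairs 𝕜 X) := by
    have h1 : IsClosed {q : X × (X →L[𝕜] 𝕜) | ‖q.1‖ = 1} :=
      isClosed_eq (continuous_norm.comp continuous_fst) continuous_const
    have h2 : IsClosed {q : X × (X →L[𝕜] 𝕜) | ‖q.2‖ = 1} :=
      isClosed_eq (continuous_norm.comp continuous_snd) continuous_const
    have h3 : IsClosed {q : X × (X →L[𝕜] 𝕜) | q.2 q.1 = 1} :=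
      isClosed_eq heval continuous_const
    exact h1.inter (h2.inter h3)
  have hDbd : Bornology.IsBounded (dualPairs 𝕜 X) := by
    refine (Metric.isBounded_closedBall (x := (0 : X)) (r := 1)).prod
      (Metric.isBounded_closedBall (x := (0 : X →L[𝕜] 𝕜)) (r := 1)) |>.subset ?_
    rintro ⟨y, φ⟩ ⟨h1, h2, _⟩
    exact ⟨mem_closedBall_zero_iff.2 h1.le, mem_closedBall_zero_iff.2 h2.le⟩
  have hDcomp : IsCompact (dualPairs 𝕜 X) :=
    Metric.isCompact_of_isClosed_isBounded hDclosed hDbd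
  -- continuity of f
  have hfc : Continuous f := by
    refine (Real.continuous_rpow_const hip0).comp ?_
    refine continuous_finset_sum _ fun i _ => ?_
    refine (Real.continuous_rpow_const hp0).comp ?_
    exact (heval.comp ((((T i).continuous.comp continuous_fst)).prodMk continuous_snd)).norm
  -- global maximizer
  obtain ⟨q0, hq0D, hq0max⟩ := hDcomp.exists_isMaxOn ⟨(x, g0), hpair0⟩ hfc.continuousOn
  have hq0max' : ∀ q ∈ dualPairs 𝕜 X, f q ≤ f q0 := fun q hq => hq0max hq
  have hsup : sSup S = f q0 := by
    refine le_antisymm (csSup_le hSne ?_) (le_csSup hbdd ⟨q0, hq0D, rfl⟩)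
    rintro r ⟨q, hq, rfl⟩
    exact hq0max' q hq
  obtain ⟨hx01, hψ0n, hψ0x0⟩ := hq0D
  -- first application of face_max : dual side
  set Λd : (X →L[𝕜] 𝕜) →L[𝕜] 𝕜 := ContinuousLinearMap.apply 𝕜 𝕜 q0.1 with hΛd_def
  have hΛd_app : ∀ φ : X →L[𝕜] 𝕜, Λd φ = φ q0.1 := fun φ => rfl
  have hΛd : ‖Λd‖ ≤ 1 := by
    refine ContinuousLinearMap.opNorm_le_bound _ zero_le_one fun φ => ?_
    rw [hΛd_app, one_mul]
    calc ‖φ q0.1‖ ≤ ‖φ‖ * ‖q0.1‖ := φ.le_opNorm _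
      _ = ‖φ‖ := by rw [hx01, mul_one]
  have hgd_conv : ConvexOn ℝ Set.univ (fun φ : X →L[𝕜] 𝕜 => ∑ i, ‖φ (T i q0.1)‖ ^ p) := by
    exact convexOn_sum_norm_rpow hp (fun i (φ : X →L[𝕜] 𝕜) => φ (T i q0.1))
      (fun i φ ψ => ContinuousLinearMap.add_apply φ ψ (T i q0.1))
      (fun i a φ => rfl)
  have hgd_cont : Continuous (fun φ : X →L[𝕜] 𝕜 => ∑ i, ‖φ (T i q0.1)‖ ^ p) := by
    refine continuous_finset_sum _ fun i _ => ?_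
    exact (Real.continuous_rpow_const hp0).comp
      ((ContinuousLinearMap.apply 𝕜 𝕜 (T i q0.1)).continuous.norm)
  obtain ⟨φ1, hφ1le, hφ1x0, hφ1ext, hφ1ge⟩ :=
    face_max Λd hΛd (e₀ := q0.2) hψ0n.le hψ0x0 hgd_conv hgd_cont
  have hφ1x0' : φ1 q0.1 = 1 := by rw [← hΛd_app]; exact hφ1x0
  have hφ1norm : ‖φ1‖ = 1 := by
    refine le_antisymm hφ1le ?_
    have h1 : ‖φ1 q0.1‖ = 1 := by rw [hφ1x0']; simp
    calc (1:ℝ) = ‖φ1 q0.1‖ := h1.symm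
      _ ≤ ‖φ1‖ * ‖q0.1‖ := φ1.le_opNorm _
      _ = ‖φ1‖ := by rw [hx01, mul_one]
  -- second application of face_max : primal side
  have hgx_conv : ConvexOn ℝ Set.univ (fun y : X => ∑ i, ‖φ1 (T i y)‖ ^ p) := by
    exact convexOn_sum_norm_rpow hp (fun i y => φ1 (T i y))
      (fun i y z => by simp [map_add])
      (fun i a y => by simp [ContinuousLinearMap.map_smul_of_tower])
  have hgx_cont : Continuous (fun y : X => ∑ i, ‖φ1 (T i y)‖ ^ p) := by
    refine continuous_finset_sum _ fun i _ => ?_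
    exact (Real.continuous_rpow_const hp0).comp
      ((φ1.continuous.comp (T i).continuous).norm)
  obtain ⟨x1, hx1le, hφ1x1, hx1ext, hx1ge⟩ :=
    face_max φ1 hφ1norm.le (e₀ := q0.1) hx01.le hφ1x0' hgx_conv hgx_cont
  have hx1norm : ‖x1‖ = 1 := by
    refine le_antisymm hx1le ?_
    have h1 : ‖φ1 x1‖ = 1 := by rw [hφ1x1]; simp
    calc (1:ℝ) = ‖φ1 x1‖ := h1.symm
      _ ≤ ‖φ1‖ * ‖x1‖ := φ1.le_opNorm _
      _ = ‖x1‖ := by rw [hφ1norm, one_mul]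
  have hpair1 : (x1, φ1) ∈ dualPairs 𝕜 X := ⟨hx1norm, hφ1norm, hφ1x1⟩
  -- chaining the inequalities
  have hφ1geψ0 : (∑ i, ‖q0.2 (T i q0.1)‖ ^ p) ≤ ∑ i, ‖φ1 (T i x1)‖ ^ p := by
    calc (∑ i, ‖q0.2 (T i q0.1)‖ ^ p) ≤ ∑ i, ‖φ1 (T i q0.1)‖ ^ p := hφ1ge
      _ ≤ ∑ i, ‖φ1 (T i x1)‖ ^ p := hx1ge
  have hge : f q0 ≤ f (x1, φ1) :=
    Real.rpow_le_rpow (Finset.sum_nonneg fun i _ => Real.rpow_nonneg (norm_nonneg _) p)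
      hφ1geψ0 hip0
  have hle : f (x1, φ1) ≤ sSup S := le_csSup hbdd ⟨(x1, φ1), hpair1, rfl⟩
  have hval : jointNumRadius p T = (∑ i, ‖φ1 (T i x1)‖ ^ p) ^ (1 / p) := by
    rw [hJ]
    refine le_antisymm ?_ hle
    rw [hsup]
    exact hge
  refine ⟨⟨(x1, φ1), hpair1, hx1ext, hφ1ext, hval⟩, ?_⟩
  rintro q hq _ _
  rw [hJ]
  exact le_csSup hbdd ⟨q, hq, rfl⟩
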